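/- Let n ∈ ℕ, μ > 0 and x* ∈ ℝⁿ with ‖x*‖₁ > μ. Let Δₙ := {y ∈ ℝⁿ : ∑ᵢ yᵢ = 1 and yᵢ ≥ 0 for all i} be the standard simplex, and let s ∈ Δₙ be the (unique) point of Δₙ nearest in Euclidean norm to the vector (|x*₁|/μ, …, |x*ₙ|/μ). Then the point of B₁(μ) := {y ∈ ℝⁿ : ‖y‖₁ ≤ μ} nearest in Euclidean norm to x* is the vector whose i-th component is μ · sign(x*ᵢ) · sᵢ. -/

import Mathlib

noncomputable def l1Norm {n : ℕ} (x : Fin n → ℝ) : ℝ := ∑ i, |x i|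

private lemma simplex_complete {n : ℕ} (z v : Fin n → ℝ) (hzsum : 1 < ∑ i, z i)
    (hv : ∀ i, 0 ≤ v i) (hvsum : ∑ i, v i ≤ 1) :
    ∃ v' : Fin n → ℝ, (∑ i, v' i) = 1 ∧ (∀ i, 0 ≤ v' i) ∧
      ∀ i, |z i - v' i| ≤ |z i - v i| := by
  set D : ℝ := ∑ i, max (z i - v i) 0 with hD
  set t : ℝ := 1 - ∑ i, v i with ht
  have ht0 : 0 ≤ t := by simp [ht]; linarith
  have hDge : ∑ i, (z i - v i) ≤ D := by
    apply Finset.sum_le_sum; intro i _; exact le_max_left _ _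
  have htD : t < D := by
    have : ∑ i, (z i - v i) = (∑ i, z i) - ∑ i, v i := by
      rw [Finset.sum_sub_distrib]
    linarith
  have hD0 : 0 < D := lt_of_le_of_lt ht0 htD
  set lam : ℝ := t / D with hlam
  have hlam0 : 0 ≤ lam := div_nonneg ht0 hD0.le
  have hlam1 : lam ≤ 1 := by
    rw [hlam, div_le_one hD0]; linarith
  refine ⟨fun i => v i + lam * max (z i - v i) 0, ?_, ?_, ?_⟩
  · rw [Finset.sum_add_distrib, ← Finset.mul_sum, ← hD, hlam, div_mul_cancel₀ _ hD0.ne']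
    simp [ht]
  · intro i
    dsimp only
    have h1 : 0 ≤ lam * max (z i - v i) 0 := mul_nonneg hlam0 (le_max_right _ _)
    linarith [hv i]
  · intro i
    dsimp only
    rcases le_or_gt (z i) (v i) with h | h
    · simp [max_eq_right (by linarith : z i - v i ≤ 0)]
    · have hmax : max (z i - v i) 0 = z i - v i := max_eq_left (by linarith)
      have hz1 : (0:ℝ) ≤ (1 - lam) * (z i - v i) :=
        mul_nonneg (by linarith) (by linarith)
      have hz2 : (0:ℝ) ≤ lam * (z i - v i) := mul_nonneg hlam0 (by linarith)
      rw [hmax, abs_of_nonneg (by linarith), abs_of_nonneg (by nlinarith)]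
      nlinarith

theorem stmt_9 {n : ℕ} (μ : ℝ) (hμ : 0 < μ) (xstar : EuclideanSpace ℝ (Fin n))
    (hx : l1Norm xstar > μ)
    (z : EuclideanSpace ℝ (Fin n)) (hz : ∀ i, z i = |xstar i| / μ)
    (s : EuclideanSpace ℝ (Fin n))
    (hs1 : (∑ i, s i) = 1 ∧ ∀ i, 0 ≤ s i)
    (hs2 : ∀ y : EuclideanSpace ℝ (Fin n), ((∑ i, y i) = 1 ∧ ∀ i, 0 ≤ y i) →
      ‖z - s‖ ≤ ‖z - y‖)
    (w : EuclideanSpace ℝ (Fin n))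
    (hw : ∀ i, w i = μ * Real.sign (xstar i) * s i) :
    l1Norm w ≤ μ ∧
      ∀ y : EuclideanSpace ℝ (Fin n), l1Norm y ≤ μ → ‖xstar - w‖ ≤ ‖xstar - y‖ := by
  obtain ⟨hsum1, hsnn⟩ := hs1
  have hsign : ∀ i, |Real.sign (xstar i)| ≤ 1 := by
    intro i
    rcases Real.sign_apply_eq (xstar i) with h | h | h <;> simp [h]
  constructor
  · calc l1Norm w = ∑ i, |μ * Real.sign (xstar i) * s i| := by
          unfold l1Norm; exact Finset.sum_congr rfl (fun i _ => by rw [hw i])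
      _ ≤ ∑ i, μ * s i := by
          apply Finset.sum_le_sum; intro i _
          rw [abs_mul, abs_mul, abs_of_pos hμ, abs_of_nonneg (hsnn i)]
          have h1 : μ * |Real.sign (xstar i)| * s i ≤ μ * 1 * s i :=
            mul_le_mul_of_nonneg_right
              (mul_le_mul_of_nonneg_left (hsign i) hμ.le) (hsnn i)
          simpa using h1
      _ = μ := by rw [← Finset.mul_sum, hsum1, mul_one]
  · intro y hy
    set u : Fin n → ℝ := fun i => |y i| / μ with hu
    have hun : ∀ i, 0 ≤ u i := fun i => div_nonneg (abs_nonneg _) hμ.le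
    have husum : ∑ i, u i ≤ 1 := by
      rw [hu]
      have h1 : ∑ i, |y i| / μ = (∑ i, |y i|) / μ := by rw [Finset.sum_div]
      rw [h1, div_le_one hμ]
      exact hy
    have hzsum : 1 < ∑ i, z i := by
      have h1 : ∑ i, z i = (∑ i, |xstar i|) / μ := by
        rw [Finset.sum_div]; exact Finset.sum_congr rfl (fun i _ => hz i)
      rw [h1, lt_div_iff₀ hμ, one_mul]
      exact hx
    obtain ⟨v', hv'sum, hv'nn, hv'pt⟩ := simplex_complete z u hzsum hun husum
    set v2 : EuclideanSpace ℝ (Fin n) := WithLp.toLp 2 v' with hv2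
    have hkey := hs2 v2 ⟨hv'sum, hv'nn⟩
    have hsq : ∑ i, (z i - s i) ^ 2 ≤ ∑ i, (z i - v' i) ^ 2 := by
      have h1 : ‖z - s‖ = Real.sqrt (∑ i, (z i - s i) ^ 2) := by
        rw [EuclideanSpace.norm_eq]
        congr 1; apply Finset.sum_congr rfl; intro i _
        simp [Real.norm_eq_abs, sq_abs]
      have h2 : ‖z - v2‖ = Real.sqrt (∑ i, (z i - v' i) ^ 2) := by
        rw [EuclideanSpace.norm_eq]
        congr 1; apply Finset.sum_congr rfl; intro i _
        simp [Real.norm_eq_abs, sq_abs, hv2]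
      rw [h1, h2] at hkey
      exact (Real.sqrt_le_sqrt_iff (by positivity)).mp hkey
    have chain : ∑ i, (xstar i - w i) ^ 2 ≤ ∑ i, (xstar i - y i) ^ 2 := by
      have step1 : ∑ i, (xstar i - w i) ^ 2 ≤ ∑ i, μ ^ 2 * (z i - s i) ^ 2 := by
        apply Finset.sum_le_sum; intro i _
        rw [hw i, hz i]
        have habs : |xstar i - μ * Real.sign (xstar i) * s i| ≤ |(|xstar i| - μ * s i)| := by
          rcases lt_trichotomy (xstar i) 0 with h | h | h
          · rw [Real.sign_of_neg h]
            have he : xstar i - μ * (-1) * s i = -((|xstar i|) - μ * s i) := by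
              rw [abs_of_neg h]; ring
            rw [he, abs_neg]
          · simp only [h, Real.sign_zero, mul_zero, zero_mul, sub_zero, abs_zero]
            positivity
          · rw [Real.sign_of_pos h]
            have he : xstar i - μ * 1 * s i = |xstar i| - μ * s i := by
              rw [abs_of_pos h]; ring
            rw [he]
        have h2 : μ ^ 2 * (|xstar i| / μ - s i) ^ 2 = (|xstar i| - μ * s i) ^ 2 := by
          field_simp
          try ring
        rw [h2]
        calc (xstar i - μ * Real.sign (xstar i) * s i) ^ 2
            = |xstar i - μ * Real.sign (xstar i) * s i| ^ 2 := (sq_abs _).symm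
          _ ≤ |(|xstar i| - μ * s i)| ^ 2 := by
              exact pow_le_pow_left₀ (abs_nonneg _) habs 2
          _ = (|xstar i| - μ * s i) ^ 2 := sq_abs _
      have step2 : ∑ i, μ ^ 2 * (z i - s i) ^ 2 ≤ ∑ i, μ ^ 2 * (z i - v' i) ^ 2 := by
        rw [← Finset.mul_sum, ← Finset.mul_sum]
        exact mul_le_mul_of_nonneg_left hsq (by positivity)
      have step3 : ∑ i, μ ^ 2 * (z i - v' i) ^ 2 ≤ ∑ i, μ ^ 2 * (z i - u i) ^ 2 := by
        apply Finset.sum_le_sum; intro i _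
        have h := pow_le_pow_left₀ (abs_nonneg _) (hv'pt i) 2
        rw [sq_abs, sq_abs] at h
        exact mul_le_mul_of_nonneg_left h (by positivity)
      have step4 : ∑ i, μ ^ 2 * (z i - u i) ^ 2 ≤ ∑ i, (xstar i - y i) ^ 2 := by
        apply Finset.sum_le_sum; intro i _
        rw [hz i, hu]
        have h2 : μ ^ 2 * (|xstar i| / μ - |y i| / μ) ^ 2 = (|xstar i| - |y i|) ^ 2 := by
          field_simp
          try ring
        rw [h2]
        have habs : |(|xstar i| - |y i|)| ≤ |xstar i - y i| := abs_abs_sub_abs_le_abs_sub _ _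
        calc (|xstar i| - |y i|) ^ 2 = |(|xstar i| - |y i|)| ^ 2 := (sq_abs _).symm
          _ ≤ |xstar i - y i| ^ 2 := pow_le_pow_left₀ (abs_nonneg _) habs 2
          _ = (xstar i - y i) ^ 2 := sq_abs _
      linarith
    rw [EuclideanSpace.norm_eq, EuclideanSpace.norm_eq]
    apply Real.sqrt_le_sqrt
    calc ∑ i, ‖(xstar - w) i‖ ^ 2 = ∑ i, (xstar i - w i) ^ 2 := by
          apply Finset.sum_congr rfl; intro i _
          simp [Real.norm_eq_abs, sq_abs]
      _ ≤ ∑ i, (xstar i - y i) ^ 2 := chain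
      _ = ∑ i, ‖(xstar - y) i‖ ^ 2 := by
          apply Finset.sum_congr rfl; intro i _
          simp [Real.norm_eq_abs, sq_abs]
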